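/- For all ν > 0, M > 0, γ₀ > 0, γ₁ ∈ (0,1], γ₂ ∈ (0,1), and t ≥ 0, the shear flow b(t,·) satisfies: (i) b(t,·) is odd in y; (ii) ∂_y² b(t,y) = −2yγ₀²M·[ (4νt+γ₀²)^{−3/2}·exp(−y²/(4νt+γ₀²)) − γ₂γ₁³·(4νt+γ₀²γ₁²)^{−3/2}·exp(−y²/(4νt+γ₀²γ₁²)) ]; (iii) b(t,y) > 0 and ∂_y² b(t,y) < 0 for every y > 0; consequently y = 0 is the only inflection point of b(t,·), and ∂_y² b(t,y)/b(t,y) < 0 for every y ≠ 0. -/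

import Mathlib

open MeasureTheory Real Filter Set

noncomputable section

/-- The shear flow `b(t,y)` from the paper (eq. (1.6)/(2.1)):
`b(t,y) = y + M·(∫₀^y (γ₀²/√(4νt+γ₀²))·exp(−z²/(4νt+γ₀²)) dz
  − γ₂·∫₀^y (γ₀²γ₁³/√(4νt+γ₀²γ₁²))·exp(−z²/(4νt+γ₀²γ₁²)) dz)`. -/
def shearFlow (ν M γ₀ γ₁ γ₂ : ℝ) (t y : ℝ) : ℝ :=
  y + M * ((∫ z in (0:ℝ)..y, γ₀^2 / Real.sqrt (4*ν*t + γ₀^2) * Real.exp (-z^2 / (4*ν*t + γ₀^2)))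
    - γ₂ * ∫ z in (0:ℝ)..y, γ₀^2 * γ₁^3 / Real.sqrt (4*ν*t + γ₀^2*γ₁^2) *
        Real.exp (-z^2 / (4*ν*t + γ₀^2*γ₁^2)))

/-- The potential `q = b''/b`, extended continuously at `y = 0`
(where `b(0) = b''(0) = 0`). -/
def qExt (b : ℝ → ℝ) : ℝ → ℝ := fun y =>
  if y = 0 then limUnder (nhdsWithin 0 {(0:ℝ)}ᶜ) (fun z => deriv (deriv b) z / b z)
  else deriv (deriv b) y / b y

/-- The set of Rayleigh quotients `∫|φ'|² + ∫ (b''/b)·φ²` over normalized `φ ∈ H¹(ℝ)`. -/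
def lambdaSet (b : ℝ → ℝ) : Set ℝ :=
  { E | ∃ φ : ℝ → ℝ, Differentiable ℝ φ ∧ MemLp φ 2 (volume : Measure ℝ) ∧
      MemLp (deriv φ) 2 (volume : Measure ℝ) ∧ (∫ y : ℝ, (φ y)^2) = 1 ∧
      E = (∫ y : ℝ, (deriv φ y)^2) + ∫ y : ℝ, qExt b y * (φ y)^2 }

/-- `λ(M,t)`: the infimum of the Rayleigh quotient for the shear flow. -/
def lambdaVal (ν M γ₀ γ₁ γ₂ t : ℝ) : ℝ := sInf (lambdaSet (shearFlow ν M γ₀ γ₁ γ₂ t))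

/-- `c` is an eigenvalue of the Rayleigh operator `R_{b,k} = b·Id − b''·(∂_y² − k²)⁻¹`:
there are `ω ∈ L²(ℝ,ℂ)`, `ω ≠ 0`, and a `C²` stream function `ψ` with
`ψ, ψ', ψ'' ∈ L²`, such that `ψ'' − k²ψ = ω` everywhere and
`(b − c)·ω = b''·ψ` almost everywhere. -/
def IsRayleighEigenvalue (b : ℝ → ℝ) (k : ℝ) (c : ℂ) : Prop :=
  ∃ ω ψ : ℝ → ℂ,
    MemLp ω 2 (volume : Measure ℝ) ∧ ¬ (ω =ᵐ[(volume : Measure ℝ)] (0 : ℝ → ℂ)) ∧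
    ContDiff ℝ 2 ψ ∧ MemLp ψ 2 (volume : Measure ℝ) ∧
    MemLp (deriv ψ) 2 (volume : Measure ℝ) ∧ MemLp (deriv (deriv ψ)) 2 (volume : Measure ℝ) ∧
    (∀ y : ℝ, deriv (deriv ψ) y - (k:ℂ)^2 * ψ y = ω y) ∧
    (∀ᵐ y : ℝ ∂(volume : Measure ℝ),
      ((b y : ℂ) - c) * ω y = ((deriv (deriv b) y : ℝ) : ℂ) * ψ y)

/-- First derivative of the shear flow. -/
lemma shearFlow_deriv (ν M γ₀ γ₁ γ₂ t : ℝ) :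
    deriv (shearFlow ν M γ₀ γ₁ γ₂ t) = fun y =>
      1 + M * (γ₀^2 / Real.sqrt (4*ν*t + γ₀^2) * Real.exp (-y^2 / (4*ν*t + γ₀^2))
        - γ₂ * (γ₀^2 * γ₁^3 / Real.sqrt (4*ν*t + γ₀^2*γ₁^2) *
            Real.exp (-y^2 / (4*ν*t + γ₀^2*γ₁^2)))) := by
  funext y
  have h1 : Continuous fun z : ℝ =>
      γ₀^2 / Real.sqrt (4*ν*t + γ₀^2) * Real.exp (-z^2 / (4*ν*t + γ₀^2)) := by
    fun_prop
  have h2 : Continuous fun z : ℝ =>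
      γ₀^2 * γ₁^3 / Real.sqrt (4*ν*t + γ₀^2*γ₁^2) * Real.exp (-z^2 / (4*ν*t + γ₀^2*γ₁^2)) := by
    fun_prop
  have H1 := (h1.integral_hasStrictDerivAt 0 y).hasDerivAt
  have H2 := (h2.integral_hasStrictDerivAt 0 y).hasDerivAt
  exact ((hasDerivAt_id y).add ((H1.sub (H2.const_mul γ₂)).const_mul M)).deriv

/-- Second derivative of the shear flow. -/
lemma shearFlow_deriv2 (ν M γ₀ γ₁ γ₂ t : ℝ)
    (hA : 0 < 4*ν*t + γ₀^2) (hB : 0 < 4*ν*t + γ₀^2*γ₁^2) (y : ℝ) :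
    deriv (deriv (shearFlow ν M γ₀ γ₁ γ₂ t)) y
      = -2 * y * γ₀^2 * M *
        (Real.exp (-y^2 / (4*ν*t + γ₀^2)) / (Real.sqrt (4*ν*t + γ₀^2))^3
          - γ₂ * γ₁^3 * Real.exp (-y^2 / (4*ν*t + γ₀^2*γ₁^2))
              / (Real.sqrt (4*ν*t + γ₀^2*γ₁^2))^3) := by
  rw [shearFlow_deriv]
  set A := 4*ν*t + γ₀^2 with hAdef
  set B := 4*ν*t + γ₀^2*γ₁^2 with hBdef
  have hdA : HasDerivAt (fun y : ℝ => -y^2/A) (-(2*y)/A) y := by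
    have := ((hasDerivAt_pow 2 y).neg).div_const A
    simpa using this
  have hdB : HasDerivAt (fun y : ℝ => -y^2/B) (-(2*y)/B) y := by
    have := ((hasDerivAt_pow 2 y).neg).div_const B
    simpa using this
  have hEA : HasDerivAt (fun y : ℝ => Real.exp (-y^2/A))
      (Real.exp (-y^2/A) * (-(2*y)/A)) y := (Real.hasDerivAt_exp _).comp y hdA
  have hEB : HasDerivAt (fun y : ℝ => Real.exp (-y^2/B))
      (Real.exp (-y^2/B) * (-(2*y)/B)) y := (Real.hasDerivAt_exp _).comp y hdB
  have H : HasDerivAt (fun y : ℝ => 1 + M * (γ₀^2 / Real.sqrt A * Real.exp (-y^2/A)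
      - γ₂ * (γ₀^2 * γ₁^3 / Real.sqrt B * Real.exp (-y^2/B))))
      (M * (γ₀^2 / Real.sqrt A * (Real.exp (-y^2/A) * (-(2*y)/A))
        - γ₂ * (γ₀^2 * γ₁^3 / Real.sqrt B * (Real.exp (-y^2/B) * (-(2*y)/B))))) y := by
    have := (hasDerivAt_const y (1:ℝ)).add
      (((hEA.const_mul (γ₀^2 / Real.sqrt A)).sub
        ((hEB.const_mul (γ₀^2 * γ₁^3 / Real.sqrt B)).const_mul γ₂)).const_mul M)
    rw [zero_add] at this
    exact this
  rw [H.deriv]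
  set EA := Real.exp (-y^2/A)
  set EB := Real.exp (-y^2/B)
  set sA := Real.sqrt A with hsAdef
  set sB := Real.sqrt B with hsBdef
  have hsA : (0:ℝ) < sA := Real.sqrt_pos.mpr hA
  have hsB : (0:ℝ) < sB := Real.sqrt_pos.mpr hB
  have hA2 : sA ^ 2 = A := Real.sq_sqrt hA.le
  have hB2 : sB ^ 2 = B := Real.sq_sqrt hB.le
  rw [← hA2, ← hB2]
  have h1 : sA ≠ 0 := ne_of_gt hsA
  have h2 : sB ≠ 0 := ne_of_gt hsB
  field_simp
  ring

/-- Positivity of the bracket in the second derivative formula. -/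
lemma shearFlow_bracket_pos (ν γ₀ γ₁ γ₂ t : ℝ) (hν : 0 < ν)
    (hγ₀ : 0 < γ₀) (hγ₁ : γ₁ ∈ Set.Ioc (0:ℝ) 1) (hγ₂ : γ₂ ∈ Set.Ioo (0:ℝ) 1)
    (ht : 0 ≤ t) (y : ℝ) :
    0 < Real.exp (-y^2 / (4*ν*t + γ₀^2)) / (Real.sqrt (4*ν*t + γ₀^2))^3
          - γ₂ * γ₁^3 * Real.exp (-y^2 / (4*ν*t + γ₀^2*γ₁^2))
              / (Real.sqrt (4*ν*t + γ₀^2*γ₁^2))^3 := by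
  obtain ⟨hγ₁0, hγ₁1⟩ := hγ₁
  obtain ⟨hγ₂0, hγ₂1⟩ := hγ₂
  have hνt : 0 ≤ ν * t := mul_nonneg hν.le ht
  set A := 4*ν*t + γ₀^2 with hAdef
  set B := 4*ν*t + γ₀^2*γ₁^2 with hBdef
  have hA : 0 < A := by positivity
  have hB : 0 < B := by positivity
  have h1sq : γ₁^2 ≤ 1 := by nlinarith
  have hBA : B ≤ A := by
    have : γ₀^2*γ₁^2 ≤ γ₀^2 := by nlinarith [mul_nonneg (sq_nonneg γ₀) (sub_nonneg.mpr h1sq)]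
    simp only [hAdef, hBdef]; linarith
  have hE : Real.exp (-y^2/B) ≤ Real.exp (-y^2/A) := by
    apply Real.exp_le_exp.mpr
    rw [neg_div, neg_div, neg_le_neg_iff]
    exact div_le_div_of_nonneg_left (sq_nonneg y) hB hBA
  have key : γ₁ * Real.sqrt A ≤ Real.sqrt B := by
    have h1 : γ₁^2 * A ≤ B := by
      simp only [hAdef, hBdef]; nlinarith [mul_nonneg hνt (sub_nonneg.mpr h1sq)]
    have := Real.sqrt_le_sqrt h1
    rwa [Real.sqrt_mul (sq_nonneg _), Real.sqrt_sq hγ₁0.le] at this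
  have hcube : γ₁^3 * (Real.sqrt A)^3 ≤ (Real.sqrt B)^3 := by
    have := pow_le_pow_left₀ (by positivity) key 3
    rwa [mul_pow] at this
  have hsA : (0:ℝ) < Real.sqrt A := Real.sqrt_pos.mpr hA
  have hsB : (0:ℝ) < Real.sqrt B := Real.sqrt_pos.mpr hB
  rw [sub_pos, div_lt_div_iff₀ (by positivity) (by positivity)]
  have hEB : 0 < Real.exp (-y^2/B) := Real.exp_pos _
  nlinarith [mul_pos hEB (pow_pos hsA 3), mul_pos (mul_pos (pow_pos hγ₁0 3) hEB) (pow_pos hsA 3),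
    mul_le_mul_of_nonneg_left hcube hEB.le,
    mul_le_mul_of_nonneg_right hE (pow_pos hsB 3).le]

/-- The shear flow dominates `y` on the right half line. -/
lemma shearFlow_ge (ν M γ₀ γ₁ γ₂ t : ℝ) (hν : 0 < ν) (hM : 0 < M)
    (hγ₀ : 0 < γ₀) (hγ₁ : γ₁ ∈ Set.Ioc (0:ℝ) 1) (hγ₂ : γ₂ ∈ Set.Ioo (0:ℝ) 1)
    (ht : 0 ≤ t) (y : ℝ) (hy : 0 ≤ y) : y ≤ shearFlow ν M γ₀ γ₁ γ₂ t y := by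
  obtain ⟨hγ₁0, hγ₁1⟩ := hγ₁
  obtain ⟨hγ₂0, hγ₂1⟩ := hγ₂
  have hνt : 0 ≤ ν * t := mul_nonneg hν.le ht
  set A := 4*ν*t + γ₀^2 with hAdef
  set B := 4*ν*t + γ₀^2*γ₁^2 with hBdef
  have hA : 0 < A := by positivity
  have hB : 0 < B := by positivity
  have h1sq : γ₁^2 ≤ 1 := by nlinarith
  have hBA : B ≤ A := by
    have : γ₀^2*γ₁^2 ≤ γ₀^2 := by nlinarith [mul_nonneg (sq_nonneg γ₀) (sub_nonneg.mpr h1sq)]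
    simp only [hAdef, hBdef]; linarith
  have hsA : (0:ℝ) < Real.sqrt A := Real.sqrt_pos.mpr hA
  have hsB : (0:ℝ) < Real.sqrt B := Real.sqrt_pos.mpr hB
  have h1 : Continuous fun z : ℝ => γ₀^2 / Real.sqrt A * Real.exp (-z^2 / A) := by fun_prop
  have h2 : Continuous fun z : ℝ => γ₀^2 * γ₁^3 / Real.sqrt B * Real.exp (-z^2 / B) := by
    fun_prop
  have key : γ₁^3 * Real.sqrt A ≤ Real.sqrt B := by
    have h6a : γ₁^6 ≤ 1 := pow_le_one₀ hγ₁0.le hγ₁1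
    have h4 : γ₁^4 ≤ 1 := pow_le_one₀ hγ₁0.le hγ₁1
    have h6b : γ₁^6 ≤ γ₁^2 := by nlinarith [mul_le_mul_of_nonneg_left h4 (sq_nonneg γ₁)]
    have h6 : (γ₁^3)^2 * A ≤ B := by
      simp only [hAdef, hBdef]
      nlinarith [mul_nonneg hνt (sub_nonneg.mpr h6a),
        mul_nonneg (sq_nonneg γ₀) (sub_nonneg.mpr h6b)]
    have := Real.sqrt_le_sqrt h6
    rwa [Real.sqrt_mul (sq_nonneg _), Real.sqrt_sq (by positivity)] at this
  have hpt : ∀ z : ℝ, γ₂ * (γ₀^2 * γ₁^3 / Real.sqrt B * Real.exp (-z^2 / B))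
      ≤ γ₀^2 / Real.sqrt A * Real.exp (-z^2 / A) := by
    intro z
    have hE : Real.exp (-z^2/B) ≤ Real.exp (-z^2/A) := by
      apply Real.exp_le_exp.mpr
      rw [neg_div, neg_div, neg_le_neg_iff]
      exact div_le_div_of_nonneg_left (sq_nonneg z) hB hBA
    have hc : γ₀^2 * γ₁^3 / Real.sqrt B ≤ γ₀^2 / Real.sqrt A := by
      rw [div_le_div_iff₀ hsB hsA]
      nlinarith [mul_le_mul_of_nonneg_left key (sq_nonneg γ₀)]
    calc γ₂ * (γ₀^2 * γ₁^3 / Real.sqrt B * Real.exp (-z^2 / B))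
        ≤ 1 * (γ₀^2 * γ₁^3 / Real.sqrt B * Real.exp (-z^2 / B)) := by
          apply mul_le_mul_of_nonneg_right hγ₂1.le; positivity
      _ = γ₀^2 * γ₁^3 / Real.sqrt B * Real.exp (-z^2 / B) := one_mul _
      _ ≤ γ₀^2 / Real.sqrt A * Real.exp (-z^2 / A) :=
          mul_le_mul hc hE (Real.exp_pos _).le (by positivity)
  have hint : 0 ≤ (∫ z in (0:ℝ)..y, γ₀^2 / Real.sqrt A * Real.exp (-z^2 / A))
      - γ₂ * ∫ z in (0:ℝ)..y, γ₀^2 * γ₁^3 / Real.sqrt B * Real.exp (-z^2 / B) := by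
    rw [← intervalIntegral.integral_const_mul,
      ← intervalIntegral.integral_sub (h1.intervalIntegrable 0 y)
        ((h2.intervalIntegrable 0 y).const_mul γ₂)]
    apply intervalIntegral.integral_nonneg hy
    intro z _
    have := hpt z
    linarith
  have : 0 ≤ M * ((∫ z in (0:ℝ)..y, γ₀^2 / Real.sqrt A * Real.exp (-z^2 / A))
      - γ₂ * ∫ z in (0:ℝ)..y, γ₀^2 * γ₁^3 / Real.sqrt B * Real.exp (-z^2 / B)) :=
    mul_nonneg hM.le hint
  simp only [shearFlow, hAdef, hBdef] at *
  linarith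

/-- structural sign properties of the shear flow, Section 2.
For all admissible parameters and `t ≥ 0`: (i) `b(t,·)` is odd; (ii) `∂_y² b` has the
stated explicit Gaussian form; (iii) `b(t,y) > 0` and `∂_y² b(t,y) < 0` for `y > 0`;
consequently `y = 0` is the only inflection point (`b''` vanishes only at `0`) and
`b''(t,y)/b(t,y) < 0` for every `y ≠ 0`. -/
theorem shearFlow_sign_properties (ν M γ₀ γ₁ γ₂ t : ℝ) (hν : 0 < ν) (hM : 0 < M)
    (hγ₀ : 0 < γ₀) (hγ₁ : γ₁ ∈ Set.Ioc (0:ℝ) 1) (hγ₂ : γ₂ ∈ Set.Ioo (0:ℝ) 1)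
    (ht : 0 ≤ t) :
    (∀ y : ℝ, shearFlow ν M γ₀ γ₁ γ₂ t (-y) = -(shearFlow ν M γ₀ γ₁ γ₂ t y)) ∧
    (∀ y : ℝ, deriv (deriv (shearFlow ν M γ₀ γ₁ γ₂ t)) y
      = -2 * y * γ₀^2 * M *
        (Real.exp (-y^2 / (4*ν*t + γ₀^2)) / (Real.sqrt (4*ν*t + γ₀^2))^3
          - γ₂ * γ₁^3 * Real.exp (-y^2 / (4*ν*t + γ₀^2*γ₁^2))
              / (Real.sqrt (4*ν*t + γ₀^2*γ₁^2))^3)) ∧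
    (∀ y : ℝ, 0 < y → 0 < shearFlow ν M γ₀ γ₁ γ₂ t y ∧
      deriv (deriv (shearFlow ν M γ₀ γ₁ γ₂ t)) y < 0) ∧
    deriv (deriv (shearFlow ν M γ₀ γ₁ γ₂ t)) 0 = 0 ∧
    (∀ y : ℝ, y ≠ 0 → deriv (deriv (shearFlow ν M γ₀ γ₁ γ₂ t)) y ≠ 0) ∧
    (∀ y : ℝ, y ≠ 0 →
      deriv (deriv (shearFlow ν M γ₀ γ₁ γ₂ t)) y / shearFlow ν M γ₀ γ₁ γ₂ t y < 0) := by
  have hνt : 0 ≤ ν * t := mul_nonneg hν.le ht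
  have hA : 0 < 4*ν*t + γ₀^2 := by positivity
  have hB : 0 < 4*ν*t + γ₀^2*γ₁^2 := by
    have := hγ₁.1; positivity
  -- oddness
  have hodd : ∀ y : ℝ, shearFlow ν M γ₀ γ₁ γ₂ t (-y) = -(shearFlow ν M γ₀ γ₁ γ₂ t y) := by
    intro y
    have hI : ∀ (c d : ℝ), (∫ z in (0:ℝ)..(-y), c * Real.exp (-z^2 / d))
        = -(∫ z in (0:ℝ)..y, c * Real.exp (-z^2 / d)) := by
      intro c d
      have h1 : (∫ z in (0:ℝ)..(-y), c * Real.exp (-z^2 / d))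
          = ∫ z in (0:ℝ)..(-y), c * Real.exp (-(-z)^2 / d) := by
        congr 1; funext z; rw [neg_sq]
      rw [h1, intervalIntegral.integral_comp_neg (fun z => c * Real.exp (-z^2 / d)),
        neg_zero, neg_neg, intervalIntegral.integral_symm]
    simp only [shearFlow, hI]
    ring
  have hd2 := shearFlow_deriv2 ν M γ₀ γ₁ γ₂ t hA hB
  have hbr := shearFlow_bracket_pos ν γ₀ γ₁ γ₂ t hν hγ₀ hγ₁ hγ₂ ht
  have hpos : ∀ y : ℝ, 0 < y → 0 < shearFlow ν M γ₀ γ₁ γ₂ t y := fun y hy =>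
    lt_of_lt_of_le hy (shearFlow_ge ν M γ₀ γ₁ γ₂ t hν hM hγ₀ hγ₁ hγ₂ ht y hy.le)
  refine ⟨hodd, hd2, fun y hy => ⟨hpos y hy, ?_⟩, ?_, ?_, ?_⟩
  · rw [hd2 y]
    have := hbr y
    have h2 : -2 * y * γ₀^2 * M < 0 := by
      have h' : (0:ℝ) < 2 * y * γ₀^2 * M := by positivity
      linarith
    exact mul_neg_of_neg_of_pos h2 this
  · rw [hd2 0]; ring
  · intro y hy
    rw [hd2 y]
    have := hbr y
    have h2 : -2 * y * γ₀^2 * M ≠ 0 := by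
      rcases lt_or_gt_of_ne hy with h | h
      · have h' : (0:ℝ) < 2 * (-y) * γ₀^2 * M := by
          have : (0:ℝ) < -y := by linarith
          positivity
        have : (0:ℝ) < -2 * y * γ₀^2 * M := by linarith
        exact ne_of_gt this
      · have h' : (0:ℝ) < 2 * y * γ₀^2 * M := by positivity
        have : -2 * y * γ₀^2 * M < 0 := by linarith
        exact ne_of_lt this
    exact mul_ne_zero h2 (ne_of_gt this)
  · intro y hy
    rcases lt_or_gt_of_ne hy with hneg | hpos'
    · -- y < 0 : b'' > 0, b < 0
      have hb : shearFlow ν M γ₀ γ₁ γ₂ t y < 0 := by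
        have := hpos (-y) (by linarith)
        have h2 := hodd (-y)
        rw [neg_neg] at h2
        linarith
      have hb2 : 0 < deriv (deriv (shearFlow ν M γ₀ γ₁ γ₂ t)) y := by
        rw [hd2 y]
        have := hbr y
        have h2 : 0 < -2 * y * γ₀^2 * M := by
          have h' : (0:ℝ) < 2 * (-y) * γ₀^2 * M := by
            have : (0:ℝ) < -y := by linarith
            positivity
          linarith
        exact mul_pos h2 this
      exact div_neg_of_pos_of_neg hb2 hb
    · have hb := hpos y hpos'
      have hb2 : deriv (deriv (shearFlow ν M γ₀ γ₁ γ₂ t)) y < 0 := by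
        rw [hd2 y]
        have := hbr y
        have h2 : -2 * y * γ₀^2 * M < 0 := by
          have h' : (0:ℝ) < 2 * y * γ₀^2 * M := by positivity
          linarith
        exact mul_neg_of_neg_of_pos h2 this
      exact div_neg_of_neg_of_pos hb2 hb
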